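/- arXiv:2508.12122 — 4 statements merged into one kernel-verified Lean document; each statement's English description precedes it below -/
import Mathlib

section
/- Let d ≥ 2, let G be a closed fractal subgroup of Aut T_d, and let H be an open self-similar subgroup of G. Then H is itself fractal: for every vertex v of T_d one has π_v(H_v) = H, where H_v is the stabilizer of v in H. -/
open scoped Pointwise

namespace TreeDyn

/-- Vertices of the `d`-regular rooted tree: finite words over `{0,…,d-1}`,
with the empty word as root and children of `w` the words `w ++ [x]`. -/
abbrev Vertex (d : ℕ) := List (Fin d)

/-- A function on words is length-preserving and prefix-preserving. -/
def LP (d : ℕ) (f : Vertex d → Vertex d) : Prop :=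
  (∀ w : Vertex d, (f w).length = w.length) ∧
    ∀ v w : Vertex d, v <+: w → f v <+: f w

theorem LP.id' (d : ℕ) : LP d id := ⟨fun _ => rfl, fun _ _ h => h⟩

theorem LP.comp {d : ℕ} {f g : Vertex d → Vertex d} (hf : LP d f) (hg : LP d g) :
    LP d (f ∘ g) :=
  ⟨fun w => (hf.1 (g w)).trans (hg.1 w), fun v w h => hf.2 _ _ (hg.2 _ _ h)⟩

/-- The automorphism group of the rooted `d`-regular tree, realized as the subgroup of
permutations of the vertex set which fix the root and preserve the child relation
(equivalently: length- and prefix-preserving permutations). -/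
def treeAut (d : ℕ) : Subgroup (Equiv.Perm (Vertex d)) where
  carrier := {g | LP d ⇑g ∧ LP d ⇑g⁻¹}
  one_mem' := ⟨LP.id' d, by simpa using LP.id' d⟩
  mul_mem' := by
    rintro a b ⟨ha1, ha2⟩ ⟨hb1, hb2⟩
    refine ⟨?_, ?_⟩
    · simpa [Equiv.Perm.coe_mul] using ha1.comp hb1
    · rw [mul_inv_rev]
      simpa [Equiv.Perm.coe_mul] using hb2.comp ha2
  inv_mem' := by
    rintro a ⟨h1, h2⟩
    exact ⟨h2, by simpa using h1⟩

/-- `Aut T_d`, the automorphism group of the `d`-regular rooted tree. -/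
abbrev AutT (d : ℕ) := ↥(treeAut d)

namespace AutT

variable {d : ℕ}

/-- The underlying permutation of the vertices. -/
def toPerm (g : AutT d) : Equiv.Perm (Vertex d) := g.1

theorem toPerm_mul (g h : AutT d) : (g * h).toPerm = g.toPerm * h.toPerm := rfl

theorem toPerm_inv (g : AutT d) : (g⁻¹).toPerm = (g.toPerm)⁻¹ := rfl

theorem toPerm_one : (1 : AutT d).toPerm = 1 := rfl

theorem length_apply (g : AutT d) (w : Vertex d) : (g.toPerm w).length = w.length :=
  g.2.1.1 w

theorem prefix_apply (g : AutT d) {v w : Vertex d} (h : v <+: w) :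
    g.toPerm v <+: g.toPerm w :=
  g.2.1.2 v w h

theorem take_apply (g : AutT d) (v u : Vertex d) :
    (g.toPerm (v ++ u)).take v.length = g.toPerm v := by
  have h : g.toPerm v <+: g.toPerm (v ++ u) := g.prefix_apply (List.prefix_append v u)
  have h2 := List.prefix_iff_eq_take.mp h
  rw [length_apply] at h2
  exact h2.symm

theorem apply_append (g : AutT d) (v u : Vertex d) :
    g.toPerm (v ++ u) = g.toPerm v ++ (g.toPerm (v ++ u)).drop v.length := by
  conv_lhs => rw [← List.take_append_drop v.length (g.toPerm (v ++ u))]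
  rw [take_apply]

/-- The section function: the action of `g` on the subtree over `v`, transported
to the whole tree. -/
def secFun (g : AutT d) (v : Vertex d) : Vertex d → Vertex d :=
  fun u => (g.toPerm (v ++ u)).drop v.length

theorem secFun_spec (g : AutT d) (v u : Vertex d) :
    g.toPerm (v ++ u) = g.toPerm v ++ secFun g v u :=
  apply_append g v u

theorem secFun_left (g : AutT d) (v u : Vertex d) :
    secFun g⁻¹ (g.toPerm v) (secFun g v u) = u := by
  have h1 := secFun_spec g⁻¹ (g.toPerm v) (secFun g v u)
  rw [← secFun_spec g v u] at h1
  rw [toPerm_inv] at h1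
  simp only [Equiv.Perm.inv_def, Equiv.symm_apply_apply] at h1
  exact (List.append_cancel_left h1).symm

theorem LP_secFun (g : AutT d) (v : Vertex d) : LP d (secFun g v) := by
  constructor
  · intro w
    simp only [secFun, List.length_drop, length_apply, List.length_append]
    omega
  · intro u1 u2 h
    have h2 : g.toPerm (v ++ u1) <+: g.toPerm (v ++ u2) := by
      refine g.prefix_apply ?_
      obtain ⟨t, ht⟩ := h
      exact ⟨t, by rw [List.append_assoc, ht]⟩
    exact h2.drop v.length

/-- The section of the tree automorphism `g` at the vertex `v`: the automorphism `g|_v` with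
`g (v ++ u) = g v ++ g|_v u`. -/
def sec (g : AutT d) (v : Vertex d) : AutT d :=
  ⟨{ toFun := secFun g v
     invFun := secFun g⁻¹ (g.toPerm v)
     left_inv := secFun_left g v
     right_inv := by
       intro u
       have h := secFun_left g⁻¹ (g.toPerm v) u
       rw [inv_inv] at h
       rw [toPerm_inv] at h
       simp only [Equiv.Perm.inv_def, Equiv.symm_apply_apply] at h
       exact h },
   by
     refine ⟨LP_secFun g v, ?_⟩
     have : ⇑(({ toFun := secFun g v
                 invFun := secFun g⁻¹ (g.toPerm v)
                 left_inv := secFun_left g v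
                 right_inv := by
                   intro u
                   have h := secFun_left g⁻¹ (g.toPerm v) u
                   rw [inv_inv] at h
                   rw [toPerm_inv] at h
                   simp only [Equiv.Perm.inv_def, Equiv.symm_apply_apply] at h
                   exact h } : Equiv.Perm (Vertex d))⁻¹) = secFun g⁻¹ (g.toPerm v) := rfl
     rw [this]
     exact LP_secFun g⁻¹ (g.toPerm v)⟩

theorem sec_apply (g : AutT d) (v u : Vertex d) :
    (sec g v).toPerm u = (g.toPerm (v ++ u)).drop v.length := rfl

end AutT

open AutT

/-- The stabilizer of the vertex `v` in `Aut T_d`. -/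
def stabT (d : ℕ) (v : Vertex d) : Subgroup (AutT d) where
  carrier := {g | g.toPerm v = v}
  one_mem' := rfl
  mul_mem' := by
    intro a b ha hb
    show (a * b).toPerm v = v
    rw [toPerm_mul, Equiv.Perm.mul_apply]
    rw [show b.toPerm v = v from hb, show a.toPerm v = v from ha]
  inv_mem' := by
    intro a ha
    show (a⁻¹).toPerm v = v
    rw [toPerm_inv]
    rw [Equiv.Perm.inv_eq_iff_eq]
    exact (show a.toPerm v = v from ha).symm

/-- The self-similarity homomorphism `π_v` from the stabilizer of `v` to `Aut T_d`,
`g ↦ g|_v`. -/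
def secHom (d : ℕ) (v : Vertex d) : (stabT d v) →* AutT d where
  toFun g := sec g.1 v
  map_one' := by
    apply Subtype.ext
    apply Equiv.ext
    intro u
    show ((1 : AutT d).toPerm (v ++ u)).drop v.length = (1 : AutT d).toPerm u
    rw [toPerm_one]
    simp [List.drop_left]
  map_mul' := by
    intro a b
    apply Subtype.ext
    apply Equiv.ext
    intro u
    have hb : (b.1).toPerm v = v := b.2
    show ((a.1 * b.1).toPerm (v ++ u)).drop v.length
        = (sec a.1 v).toPerm ((sec b.1 v).toPerm u)
    rw [toPerm_mul, Equiv.Perm.mul_apply]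
    congr 1
    congr 1
    have h := secFun_spec b.1 v u
    rw [hb] at h
    exact h

/-- The image subgroup `H^v = π_v(H_v)` of the stabilizer of `v` in `H` under the
self-similarity map. -/
def secSG (d : ℕ) (H : Subgroup (AutT d)) (v : Vertex d) : Subgroup (AutT d) :=
  (H.subgroupOf (stabT d v)).map (secHom d v)

/-- A subgroup of `Aut T_d` is self-similar if `H^v ≤ H` for every vertex `v`. -/
def IsSelfSimilar (d : ℕ) (H : Subgroup (AutT d)) : Prop :=
  ∀ v : Vertex d, secSG d H v ≤ H

/-- A subgroup of `Aut T_d` is fractal if `H^v = H` for every vertex `v`. -/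
def IsFractal (d : ℕ) (H : Subgroup (AutT d)) : Prop :=
  ∀ v : Vertex d, secSG d H v = H

end TreeDyn
namespace TreeDyn

open AutT

variable {d : ℕ}

instance : TopologicalSpace (Vertex d) := ⊥
instance : DiscreteTopology (Vertex d) := ⟨rfl⟩

/-- The profinite topology on `Aut T_d`: the topology of pointwise convergence on vertices. -/
instance : TopologicalSpace (AutT d) :=
  TopologicalSpace.induced (fun g : AutT d => (g.toPerm : Vertex d → Vertex d)) inferInstance

theorem continuous_toFun : Continuous fun g : AutT d => (g.toPerm : Vertex d → Vertex d) :=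
  continuous_induced_dom

theorem continuous_ev (x : Vertex d) : Continuous fun g : AutT d => g.toPerm x :=
  (continuous_apply x).comp continuous_toFun

instance : IsTopologicalGroup (AutT d) where
  continuous_mul := by
    apply continuous_induced_rng.2
    show Continuous fun p : AutT d × AutT d => ((p.1 * p.2).toPerm : Vertex d → Vertex d)
    apply continuous_pi
    intro x
    rw [continuous_discrete_rng]
    intro z
    have heq : ((fun p : AutT d × AutT d => (p.1 * p.2).toPerm x)) ⁻¹' {z}
        = ⋃ y : Vertex d, ((fun p : AutT d × AutT d => p.2.toPerm x) ⁻¹' {y})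
            ∩ ((fun p : AutT d × AutT d => p.1.toPerm y) ⁻¹' {z}) := by
      ext p
      simp only [Set.mem_preimage, Set.mem_singleton_iff, Set.mem_iUnion, Set.mem_inter_iff]
      constructor
      · intro h
        exact ⟨p.2.toPerm x, rfl, by rw [toPerm_mul, Equiv.Perm.mul_apply] at h; exact h⟩
      · rintro ⟨y, h1, h2⟩
        rw [toPerm_mul, Equiv.Perm.mul_apply, h1, h2]
    rw [heq]
    apply isOpen_iUnion
    intro y
    exact ((isOpen_discrete _).preimage ((continuous_ev x).comp continuous_snd)).inter
      ((isOpen_discrete _).preimage ((continuous_ev y).comp continuous_fst))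
  continuous_inv := by
    apply continuous_induced_rng.2
    show Continuous fun g : AutT d => ((g⁻¹).toPerm : Vertex d → Vertex d)
    apply continuous_pi
    intro x
    rw [continuous_discrete_rng]
    intro z
    have heq : (fun g : AutT d => (g⁻¹).toPerm x) ⁻¹' {z}
        = (fun g : AutT d => g.toPerm z) ⁻¹' {x} := by
      ext g
      simp only [Set.mem_preimage, Set.mem_singleton_iff]
      rw [toPerm_inv]
      exact Equiv.Perm.inv_eq_iff_eq.trans eq_comm
    rw [heq]
    exact (isOpen_discrete _).preimage (continuous_ev z)

end TreeDyn
namespace TreeDyn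

open AutT

/-- `J` is the self-similar closure of `H` in `G`: the smallest closed self-similar
subgroup of `G` containing `H`. -/
def IsSelfSimilarClosure (d : ℕ) (G H J : Subgroup (AutT d)) : Prop :=
  H ≤ J ∧ J ≤ G ∧ IsClosed (J : Set (AutT d)) ∧ IsSelfSimilar d J ∧
    ∀ J' : Subgroup (AutT d), H ≤ J' → J' ≤ G → IsClosed (J' : Set (AutT d)) →
      IsSelfSimilar d J' → J ≤ J'

/-- The pointwise stabilizer in `Aut T_d` of the vertices at level `m`. -/
def levelStab (d : ℕ) (m : ℕ) : Subgroup (AutT d) where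
  carrier := {g | ∀ v : Vertex d, v.length = m → g.toPerm v = v}
  one_mem' := fun _ _ => rfl
  mul_mem' := by
    intro a b ha hb v hv
    show (a * b).toPerm v = v
    rw [toPerm_mul, Equiv.Perm.mul_apply, hb v hv, ha v hv]
  inv_mem' := by
    intro a ha v hv
    show (a⁻¹).toPerm v = v
    rw [toPerm_inv, Equiv.Perm.inv_eq_iff_eq]
    exact (ha v hv).symm

/-- A topological group is pronilpotent if its quotient by every open normal subgroup
is nilpotent. -/
def Pronilpotent (G : Type*) [Group G] [TopologicalSpace G] : Prop :=
  ∀ (N : Subgroup G) [N.Normal], IsOpen (N : Set G) → Group.IsNilpotent (G ⧸ N)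

/-- A topological group is pro-`p` if its quotient by every open normal subgroup
is a `p`-group. -/
def IsProP (p : ℕ) (G : Type*) [Group G] [TopologicalSpace G] : Prop :=
  ∀ (N : Subgroup G) [N.Normal], IsOpen (N : Set G) → IsPGroup p (G ⧸ N)

/-- A topological group is prosolvable if its quotient by every open normal subgroup
is solvable. -/
def Prosolvable (G : Type*) [Group G] [TopologicalSpace G] : Prop :=
  ∀ (N : Subgroup G) [N.Normal], IsOpen (N : Set G) → IsSolvable (G ⧸ N)

/-- The Frattini subgroup of a topological group: the intersection of its
maximal open (proper) subgroups. -/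
def frattiniOpen (G : Type*) [Group G] [TopologicalSpace G] : Subgroup G :=
  sInf {M : Subgroup G | IsOpen (M : Set G) ∧ M ≠ ⊤ ∧
    ∀ M' : Subgroup G, IsOpen (M' : Set G) → M < M' → M' = ⊤}

end TreeDyn
namespace TreeDyn

open AutT

variable {d : ℕ}

/-- The cyclic successor on `Fin d`. -/
def succFin (x : Fin d) : Fin d :=
  ⟨(x.1 + 1) % d, Nat.mod_lt _ (Nat.lt_of_le_of_lt (Nat.zero_le _) x.2)⟩

/-- The cyclic predecessor on `Fin d`. -/
def predFin (x : Fin d) : Fin d :=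
  ⟨(x.1 + (d - 1)) % d, Nat.mod_lt _ (Nat.lt_of_le_of_lt (Nat.zero_le _) x.2)⟩

theorem predFin_succFin (x : Fin d) : predFin (succFin x) = x := by
  have hd : 0 < d := Nat.lt_of_le_of_lt (Nat.zero_le _) x.2
  apply Fin.ext
  show ((x.1 + 1) % d + (d - 1)) % d = x.1
  rw [Nat.mod_add_mod, show x.1 + 1 + (d - 1) = x.1 + d by omega, Nat.add_mod_right,
    Nat.mod_eq_of_lt x.2]

theorem succFin_predFin (x : Fin d) : succFin (predFin x) = x := by
  have hd : 0 < d := Nat.lt_of_le_of_lt (Nat.zero_le _) x.2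
  apply Fin.ext
  show ((x.1 + (d - 1)) % d + 1) % d = x.1
  rw [Nat.mod_add_mod, show x.1 + (d - 1) + 1 = x.1 + d by omega, Nat.add_mod_right,
    Nat.mod_eq_of_lt x.2]

theorem succFin_val_eq_zero_iff (x : Fin d) : (succFin x).1 = 0 ↔ x.1 + 1 = d := by
  show (x.1 + 1) % d = 0 ↔ x.1 + 1 = d
  by_cases h : x.1 + 1 = d
  · simp [h, Nat.mod_self]
  · rw [Nat.mod_eq_of_lt (by omega)]
    omega

theorem predFin_val_succ_eq_iff (x : Fin d) : (predFin x).1 + 1 = d ↔ x.1 = 0 := by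
  have hd : 0 < d := Nat.lt_of_le_of_lt (Nat.zero_le _) x.2
  show (x.1 + (d - 1)) % d + 1 = d ↔ x.1 = 0
  rcases Nat.eq_zero_or_pos x.1 with h | h
  · rw [h]
    simp only [Nat.zero_add]
    rw [Nat.mod_eq_of_lt (show d - 1 < d by omega)]
    simp only [iff_true, eq_self_iff_true]
    omega
  · rw [show x.1 + (d - 1) = (x.1 - 1) + d by omega, Nat.add_mod_right,
      Nat.mod_eq_of_lt (show x.1 - 1 < d by omega)]
    omega

/-- The odometer function: adds one with carrying, on words read root-first. -/
def odF (d : ℕ) : Vertex d → Vertex d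
  | [] => []
  | x :: u => succFin x :: (if x.1 + 1 = d then odF d u else u)

/-- The inverse odometer function. -/
def odG (d : ℕ) : Vertex d → Vertex d
  | [] => []
  | x :: u => predFin x :: (if x.1 = 0 then odG d u else u)

theorem odG_odF (u : Vertex d) : odG d (odF d u) = u := by
  induction u with
  | nil => rfl
  | cons x t ih =>
    simp only [odF, odG, predFin_succFin]
    by_cases h : x.1 + 1 = d
    · rw [if_pos h, if_pos ((succFin_val_eq_zero_iff x).mpr h), ih]
    · rw [if_neg h, if_neg (fun hc => h ((succFin_val_eq_zero_iff x).mp hc))]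

theorem odF_odG (u : Vertex d) : odF d (odG d u) = u := by
  induction u with
  | nil => rfl
  | cons x t ih =>
    simp only [odF, odG, succFin_predFin]
    by_cases h : x.1 = 0
    · rw [if_pos h, if_pos ((predFin_val_succ_eq_iff x).mpr h), ih]
    · rw [if_neg h, if_neg (fun hc => h ((predFin_val_succ_eq_iff x).mp hc))]

theorem odF_append (a b : Vertex d) :
    odF d (a ++ b) = odF d a ++ (if ∀ x ∈ a, x.1 + 1 = d then odF d b else b) := by
  induction a with
  | nil => simp [odF]
  | cons x t ih =>
    by_cases h : x.1 + 1 = d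
    · by_cases h2 : ∀ y ∈ t, y.1 + 1 = d
      · have hall : ∀ y ∈ x :: t, y.1 + 1 = d := by
          intro y hy
          rcases List.mem_cons.mp hy with rfl | hy
          · exact h
          · exact h2 y hy
        simp only [List.cons_append, List.append_eq, odF, if_pos h, if_pos h2, if_pos hall, ih]
      · have hall : ¬ ∀ y ∈ x :: t, y.1 + 1 = d :=
          fun hc => h2 fun y hy => hc y (List.mem_cons_of_mem x hy)
        simp only [List.cons_append, List.append_eq, odF, if_pos h, if_neg h2, if_neg hall, ih]
    · have hall : ¬ ∀ y ∈ x :: t, y.1 + 1 = d :=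
        fun hc => h (hc x (List.mem_cons_self (a := x) (l := t)))
      simp only [List.cons_append, List.append_eq, odF, if_neg h, if_neg hall]

theorem odG_append (a b : Vertex d) :
    odG d (a ++ b) = odG d a ++ (if ∀ x ∈ a, x.1 = 0 then odG d b else b) := by
  induction a with
  | nil => simp [odG]
  | cons x t ih =>
    by_cases h : x.1 = 0
    · by_cases h2 : ∀ y ∈ t, y.1 = 0
      · have hall : ∀ y ∈ x :: t, y.1 = 0 := by
          intro y hy
          rcases List.mem_cons.mp hy with rfl | hy
          · exact h
          · exact h2 y hy
        simp only [List.cons_append, List.append_eq, odG, if_pos h, if_pos h2, if_pos hall, ih]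
      · have hall : ¬ ∀ y ∈ x :: t, y.1 = 0 :=
          fun hc => h2 fun y hy => hc y (List.mem_cons_of_mem x hy)
        simp only [List.cons_append, List.append_eq, odG, if_pos h, if_neg h2, if_neg hall, ih]
    · have hall : ¬ ∀ y ∈ x :: t, y.1 = 0 :=
        fun hc => h (hc x (List.mem_cons_self (a := x) (l := t)))
      simp only [List.cons_append, List.append_eq, odG, if_neg h, if_neg hall]

theorem LP_odF : LP d (odF d) := by
  constructor
  · intro w
    induction w with
    | nil => rfl
    | cons x t ih =>
      simp only [odF]
      by_cases h : x.1 + 1 = d <;> simp [h, ih]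
  · intro v w h
    obtain ⟨t, rfl⟩ := h
    rw [odF_append]
    exact ⟨_, rfl⟩

theorem LP_odG : LP d (odG d) := by
  constructor
  · intro w
    induction w with
    | nil => rfl
    | cons x t ih =>
      simp only [odG]
      by_cases h : x.1 = 0 <;> simp [h, ih]
  · intro v w h
    obtain ⟨t, rfl⟩ := h
    rw [odG_append]
    exact ⟨_, rfl⟩

/-- The standard odometer as a permutation of the vertices. -/
def odPerm (d : ℕ) : Equiv.Perm (Vertex d) where
  toFun := odF d
  invFun := odG d
  left_inv := odG_odF
  right_inv := odF_odG

/-- The standard odometer `ω ∈ Aut T_d` (adds one to a `d`-adic digit string,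
with carrying). -/
def od (d : ℕ) : AutT d :=
  ⟨odPerm d, ⟨LP_odF, LP_odG⟩⟩

/-- The standard `d`-cycle `σ = (0 1 … d-1)` on the first level. -/
def sigmaFin (d : ℕ) : Equiv.Perm (Fin d) where
  toFun := succFin
  invFun := predFin
  left_inv := predFin_succFin
  right_inv := succFin_predFin

end TreeDyn

namespace TreeDyn

open AutT

section Aux

variable {d : ℕ}

theorem prefix_unique {v w p : Vertex d} (hv : v <+: w) (hp : p <+: w)
    (hl : p.length = v.length) : p = v := by
  rw [List.prefix_iff_eq_take.mp hp, List.prefix_iff_eq_take.mp hv, hl]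

theorem LP_inv (p : Equiv.Perm (Vertex d)) (h : LP d ⇑p) : LP d ⇑p⁻¹ := by
  have hlen : ∀ w : Vertex d, (p⁻¹ w : Vertex d).length = w.length := by
    intro w
    have h1 := h.1 (p⁻¹ w)
    rw [Equiv.Perm.inv_def, Equiv.apply_symm_apply] at h1
    exact h1.symm
  refine ⟨hlen, ?_⟩
  intro v w hvw
  set b : Vertex d := p⁻¹ w with hb
  have hbl : b.length = w.length := hlen w
  have ht : b.take v.length <+: b := List.take_prefix _ _
  have h1 : p (b.take v.length) <+: p b := h.2 _ _ ht
  have hpb : p b = w := Equiv.apply_symm_apply p w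
  rw [hpb] at h1
  have hlen2 : (p (b.take v.length)).length = v.length := by
    rw [h.1, List.length_take]
    have := hvw.length_le
    omega
  have heq : p (b.take v.length) = v := prefix_unique hvw h1 hlen2
  have heq2 : b.take v.length = p⁻¹ v := by
    apply p.injective
    rw [Equiv.Perm.inv_def, Equiv.apply_symm_apply, heq]
  rw [← heq2]
  exact ht

/-- The evaluation map realizing the topology on `Aut T_d`. -/
def evMap : AutT d → (Vertex d → Vertex d) := fun g => (g.toPerm : Vertex d → Vertex d)

theorem evMap_injective : Function.Injective (evMap (d := d)) := by
  intro g h hgh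
  apply Subtype.ext
  exact Equiv.coe_fn_injective hgh

theorem range_evMap :
    Set.range (evMap (d := d)) = {f | LP d f ∧ Function.Injective f} := by
  ext f
  constructor
  · rintro ⟨g, rfl⟩
    exact ⟨g.2.1, g.1.injective⟩
  · rintro ⟨hLP, hinj⟩
    have hsurj : Function.Surjective f := by
      intro w
      set n := w.length with hn
      have hfin : Finite {l : Vertex d | l.length = n} :=
        (List.finite_length_eq (Fin d) n).to_subtype
      let f' : {l : Vertex d | l.length = n} → {l : Vertex d | l.length = n} :=
        fun u => ⟨f u.1, by rw [Set.mem_setOf_eq, hLP.1]; exact u.2⟩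
      have hinj' : Function.Injective f' := by
        intro a b hab
        apply Subtype.ext
        exact hinj (congrArg Subtype.val hab)
      have hsurj' : Function.Surjective f' := Finite.surjective_of_injective hinj'
      obtain ⟨u, hu⟩ := hsurj' ⟨w, rfl⟩
      exact ⟨u.1, congrArg Subtype.val hu⟩
    have hbij : Function.Bijective f := ⟨hinj, hsurj⟩
    refine ⟨⟨Equiv.ofBijective f hbij, ⟨hLP, ?_⟩⟩, rfl⟩
    exact LP_inv (Equiv.ofBijective f hbij) hLP

theorem isCompact_range_evMap : IsCompact (Set.range (evMap (d := d))) := by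
  rw [range_evMap]
  have hK : {f : Vertex d → Vertex d | LP d f ∧ Function.Injective f}
      = (Set.pi Set.univ fun w : Vertex d => {u : Vertex d | u.length = w.length}) ∩
        ((⋂ (v : Vertex d) (w : Vertex d), {f : Vertex d → Vertex d |
            v <+: w → f v <+: f w}) ∩
          (⋂ (v : Vertex d) (w : Vertex d), {f : Vertex d → Vertex d |
            f v = f w → v = w})) := by
    ext f
    simp only [Set.mem_setOf_eq, Set.mem_inter_iff, Set.mem_pi, Set.mem_univ, forall_true_left,
      Set.mem_iInter]
    constructor
    · rintro ⟨⟨h1, h2⟩, h3⟩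
      exact ⟨h1, fun v w => h2 v w, fun v w h => h3 h⟩
    · rintro ⟨h1, h2, h3⟩
      exact ⟨⟨h1, h2⟩, fun a b h => h3 a b h⟩
  rw [hK]
  refine IsCompact.inter_right ?_ ?_
  · exact isCompact_univ_pi fun w => (List.finite_length_eq (Fin d) w.length).isCompact
  · refine IsClosed.inter ?_ ?_ <;>
      refine isClosed_iInter fun v => isClosed_iInter fun w => ?_
    · have heq : {f : Vertex d → Vertex d | v <+: w → f v <+: f w}
          = (fun f : Vertex d → Vertex d => (f v, f w)) ⁻¹'
            {p : Vertex d × Vertex d | v <+: w → p.1 <+: p.2} := rfl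
      rw [heq]
      exact IsClosed.preimage ((continuous_apply v).prodMk (continuous_apply w))
        (isClosed_discrete _)
    · have heq : {f : Vertex d → Vertex d | f v = f w → v = w}
          = (fun f : Vertex d → Vertex d => (f v, f w)) ⁻¹'
            {p : Vertex d × Vertex d | p.1 = p.2 → v = w} := rfl
      rw [heq]
      exact IsClosed.preimage ((continuous_apply v).prodMk (continuous_apply w))
        (isClosed_discrete _)

instance : CompactSpace (AutT d) := by
  have hemb : Topology.IsEmbedding (evMap (d := d)) := ⟨⟨rfl⟩, evMap_injective⟩
  have : CompactSpace (Set.range (evMap (d := d))) :=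
    isCompact_iff_compactSpace.mp isCompact_range_evMap
  exact hemb.toHomeomorph.symm.compactSpace

end Aux

/-- **Open self-similar subgroups of closed fractal groups are fractal.**
Let `d ≥ 2`, let `G` be a closed fractal subgroup of `Aut T_d`, and let `H` be an open
self-similar subgroup of `G`.  Then `H` is itself fractal: `π_v(H_v) = H` for every
vertex `v`. -/
theorem open_selfSimilar_subgroup_isFractal (d : ℕ) (hd : 2 ≤ d)
    (G : Subgroup (AutT d)) (hGclosed : IsClosed (G : Set (AutT d)))
    (hGfractal : IsFractal d G)
    (H : Subgroup (AutT d)) (hHG : H ≤ G)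
    (hHopen : IsOpen ((H.subgroupOf G) : Set G))
    (hHss : IsSelfSimilar d H) :
    IsFractal d H := by
  intro v
  refine le_antisymm (hHss v) ?_
  have hGv : (G.subgroupOf (stabT d v)).map (secHom d v) = G := hGfractal v
  have hcpt : CompactSpace G := isCompact_iff_compactSpace.mp hGclosed.isCompact
  have hfinH : Finite (↥G ⧸ H.subgroupOf G) :=
    Subgroup.quotient_finite_of_isOpen (H.subgroupOf G) hHopen
  set P := secSG d H v with hPdef
  have hPH : P ≤ H := hHss v
  set A := G.subgroupOf (stabT d v) with hAdef
  set B := H.subgroupOf (stabT d v) with hBdef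
  -- the inclusion-induced map on coset spaces
  let j : ↥A → ↥G := fun a => ⟨(a.1 : AutT d), a.2⟩
  let q1 : ↥A ⧸ B.subgroupOf A → ↥G ⧸ H.subgroupOf G :=
    Quotient.map' j (by
      intro a b hab
      rw [QuotientGroup.leftRel_apply] at hab ⊢
      rw [Subgroup.mem_subgroupOf] at hab ⊢
      rw [Subgroup.mem_subgroupOf] at hab
      exact hab)
  have hq1inj : Function.Injective q1 := by
    intro x y
    refine Quotient.inductionOn₂' x y ?_
    intro a b hab
    have hab' : Quotient.mk'' (j a) = Quotient.mk'' (j b) := hab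
    have h2 := Quotient.exact' hab'
    rw [QuotientGroup.leftRel_apply] at h2
    apply Quotient.sound'
    rw [QuotientGroup.leftRel_apply]
    rw [Subgroup.mem_subgroupOf] at h2 ⊢
    rw [Subgroup.mem_subgroupOf]
    exact h2
  -- the section-induced map on coset spaces
  have hmemψ : ∀ a : ↥A, secHom d v a.1 ∈ G := fun a => by
    rw [← hGv]
    exact Subgroup.mem_map_of_mem _ a.2
  let ψ : ↥A → ↥G := fun a => ⟨secHom d v a.1, hmemψ a⟩
  let q2 : ↥A ⧸ B.subgroupOf A → ↥G ⧸ P.subgroupOf G :=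
    Quotient.map' ψ (by
      intro a b hab
      rw [QuotientGroup.leftRel_apply] at hab ⊢
      rw [Subgroup.mem_subgroupOf] at hab ⊢
      rw [Subgroup.mem_subgroupOf] at hab
      show ((ψ a)⁻¹ * ψ b : ↥G).1 ∈ P
      have h2 : secHom d v ((a⁻¹ * b : ↥A).1) ∈ B.map (secHom d v) :=
        Subgroup.mem_map_of_mem _ hab
      have h3 : ((ψ a)⁻¹ * ψ b : ↥G).1 = secHom d v ((a⁻¹ * b : ↥A).1) := by
        show (secHom d v a.1)⁻¹ * secHom d v b.1 = secHom d v (a.1⁻¹ * b.1)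
        rw [map_mul, map_inv]
      rw [h3, hPdef]
      exact h2)
  have hq2surj : Function.Surjective q2 := by
    intro x
    refine Quotient.inductionOn' x ?_
    intro g
    have hg : (g : AutT d) ∈ (G.subgroupOf (stabT d v)).map (secHom d v) := by
      rw [hGv]; exact g.2
    obtain ⟨s, hs, hφ⟩ := hg
    refine ⟨Quotient.mk'' ⟨s, hs⟩, ?_⟩
    show Quotient.mk'' (ψ ⟨s, hs⟩) = Quotient.mk'' g
    exact congrArg Quotient.mk'' (Subtype.ext hφ)
  -- comparison of the two coset spaces of G
  let q3 : ↥G ⧸ P.subgroupOf G → ↥G ⧸ H.subgroupOf G :=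
    Quotient.map' id (by
      intro a b hab
      rw [QuotientGroup.leftRel_apply] at hab ⊢
      rw [Subgroup.mem_subgroupOf] at hab ⊢
      exact hPH hab)
  have hq3surj : Function.Surjective q3 := by
    intro x
    refine Quotient.inductionOn' x ?_
    intro g
    exact ⟨Quotient.mk'' g, rfl⟩
  have hfinAB : Finite (↥A ⧸ B.subgroupOf A) := Finite.of_injective q1 hq1inj
  have hfinP : Finite (↥G ⧸ P.subgroupOf G) := Finite.of_surjective q2 hq2surj
  have c1 : Nat.card (↥G ⧸ P.subgroupOf G) ≤ Nat.card (↥A ⧸ B.subgroupOf A) :=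
    Nat.card_le_card_of_surjective q2 hq2surj
  have c2 : Nat.card (↥A ⧸ B.subgroupOf A) ≤ Nat.card (↥G ⧸ H.subgroupOf G) :=
    Nat.card_le_card_of_injective q1 hq1inj
  have hbij : Function.Bijective q3 := hq3surj.bijective_of_nat_card_le (c1.trans c2)
  -- conclusion
  intro h hh
  have hhG : h ∈ G := hHG hh
  have hkey : q3 (Quotient.mk'' ⟨h, hhG⟩) = q3 (Quotient.mk'' 1) := by
    show Quotient.mk'' (id (⟨h, hhG⟩ : ↥G)) = Quotient.mk'' (id (1 : ↥G))
    apply Quotient.sound'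
    rw [QuotientGroup.leftRel_apply]
    rw [Subgroup.mem_subgroupOf]
    simpa using inv_mem hh
  have heq := Quotient.exact' (hbij.1 hkey)
  rw [QuotientGroup.leftRel_apply] at heq
  rw [Subgroup.mem_subgroupOf] at heq
  simp only [mul_one] at heq
  have hPm : (h : AutT d)⁻¹ ∈ P := by simpa using heq
  simpa using inv_mem hPm

end TreeDyn
end

section
/- Let K be a field, d a positive integer, and ζ ∈ K with ζ^{d−1} = 1. Let φ : K(x) → K(x) be the unique K-algebra field homomorphism of the rational function field with φ(x) = x + x⁻¹. If f ∈ K(x) satisfies φ(f) = x^d + ζ·x^{−d} (that is, f(x + 1/x) = x^d + ζ/x^d), then f is a polynomial: f lies in the image of K[x] under the canonical embedding into K(x). -/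
open Polynomial

namespace TwistedCheb

variable {K : Type} [Field K]

lemma aeval_X_ratfunc (p : Polynomial K) :
    Polynomial.aeval (RatFunc.X : RatFunc K) p = algebraMap (Polynomial K) (RatFunc K) p := by
  induction p using Polynomial.induction_on with
  | C a => simp [RatFunc.algebraMap_C, RatFunc.algebraMap_eq_C]
  | add p q hp hq => simp [hp, hq]
  | monomial n a h =>
      simp only [map_mul, map_pow, Polynomial.aeval_X, RatFunc.algebraMap_X] at h ⊢
      rw [pow_succ, ← mul_assoc, h, mul_assoc]

lemma transcendental_X : Transcendental K (RatFunc.X : RatFunc K) := by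
  rw [transcendental_iff]
  intro p hp
  rw [aeval_X_ratfunc] at hp
  exact IsFractionRing.injective (Polynomial K) (RatFunc K) (by simpa using hp)

lemma transcendental_X_inv : Transcendental K ((RatFunc.X : RatFunc K)⁻¹) := by
  intro h
  exact transcendental_X (by simpa using h.inv)

lemma algHom_ext {ψ₁ ψ₂ : RatFunc K →ₐ[K] RatFunc K}
    (h : ψ₁ RatFunc.X = ψ₂ RatFunc.X) : ψ₁ = ψ₂ := by
  have : (ψ₁ : RatFunc K →+* RatFunc K) = (ψ₂ : RatFunc K →+* RatFunc K) := by
    apply IsLocalization.ringHom_ext (nonZeroDivisors (Polynomial K))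
    apply Polynomial.ringHom_ext
    · intro a
      simp [RatFunc.algebraMap_C, ← RatFunc.algebraMap_eq_C, AlgHom.commutes]
    · simpa [RatFunc.algebraMap_X] using h
  exact AlgHom.coe_ringHom_injective this

end TwistedCheb

/-- **Standard twisted Chebyshev maps are polynomials.**
Let `K` be a field, `d` a positive integer, and `ζ ∈ K` with `ζ^(d-1) = 1`.  Let
`φ : K(x) → K(x)` be the (unique) `K`-algebra homomorphism of the rational function field
with `φ(x) = x + x⁻¹`.  If `f ∈ K(x)` satisfies `φ(f) = x^d + ζ·x^(-d)`, i.e.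
`f(x + 1/x) = x^d + ζ/x^d`, then `f` is a polynomial: it lies in the image of `K[x]`
under the canonical embedding into `K(x)`. -/
theorem twisted_chebyshev_is_polynomial (K : Type) [Field K] (d : ℕ) (hd : 0 < d)
    (ζ : K) (hζ : ζ ^ (d - 1) = 1)
    (φ : RatFunc K →ₐ[K] RatFunc K) (hφ : φ RatFunc.X = RatFunc.X + RatFunc.X⁻¹)
    (f : RatFunc K) (hf : φ f = RatFunc.X ^ d + RatFunc.C ζ * (RatFunc.X ^ d)⁻¹) :
    f ∈ Set.range (algebraMap (Polynomial K) (RatFunc K)) := by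
  have hX : (RatFunc.X : RatFunc K) ≠ 0 := RatFunc.X_ne_zero
  have hXi : (RatFunc.X : RatFunc K) * RatFunc.X⁻¹ = 1 := mul_inv_cancel₀ hX
  -- the automorphism σ with σ X = X⁻¹
  have hinj : Function.Injective
      (Polynomial.aeval ((RatFunc.X : RatFunc K)⁻¹) : Polynomial K →ₐ[K] RatFunc K) :=
    transcendental_iff_injective.mp TwistedCheb.transcendental_X_inv
  set σ : RatFunc K →ₐ[K] RatFunc K := IsFractionRing.liftAlgHom hinj with hσ
  have hσa : ∀ p : Polynomial K,
      σ (algebraMap (Polynomial K) (RatFunc K) p) = Polynomial.aeval (RatFunc.X : RatFunc K)⁻¹ p :=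
    fun p => IsFractionRing.lift_algebraMap hinj p
  have hσX : σ RatFunc.X = RatFunc.X⁻¹ := by
    simpa [RatFunc.algebraMap_X] using hσa Polynomial.X
  -- σ ∘ φ = φ
  have hσφ : σ.comp φ = φ := by
    apply TwistedCheb.algHom_ext
    simp [hφ, hσX, map_add, map_inv₀, add_comm]
  -- hence ζ = 1
  have hζ1 : ζ = 1 := by
    have h1 : σ (φ f) = φ f := by
      rw [← AlgHom.comp_apply, hσφ]
    rw [hf] at h1
    have hC : σ (RatFunc.C ζ) = RatFunc.C ζ := by
      rw [← RatFunc.algebraMap_eq_C]; exact σ.commutes ζ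
    rw [map_add, map_pow, map_mul, map_inv₀, map_pow, hσX, hC, inv_pow, inv_inv] at h1
    -- h1 : (X^d)⁻¹ + C ζ * X^d = X^d + C ζ * (X^d)⁻¹
    set t : RatFunc K := RatFunc.X ^ d with ht
    have htne : t ≠ 0 := pow_ne_zero _ hX
    have h2 : (RatFunc.C ζ - 1) * (t * t - 1) = 0 := by
      have := congrArg (· * t) h1
      field_simp at this
      ring_nf
      ring_nf at this
      linear_combination this
    rcases mul_eq_zero.mp h2 with h3 | h3
    · have h4 : RatFunc.C ζ = RatFunc.C 1 := by
        rw [map_one]; exact sub_eq_zero.mp h3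
      exact RatFunc.C.injective h4
    · exfalso
      have h4 : (RatFunc.X : RatFunc K) ^ (2 * d) = 1 := by
        have : t * t = 1 := by linear_combination h3
        rw [ht] at this; rw [two_mul, pow_add]; exact this
      have h5 : algebraMap (Polynomial K) (RatFunc K) (Polynomial.X ^ (2 * d)) =
          algebraMap (Polynomial K) (RatFunc K) 1 := by
        simpa [map_pow, RatFunc.algebraMap_X] using h4
      have h6 := IsFractionRing.injective (Polynomial K) (RatFunc K) h5
      have := congrArg Polynomial.natDegree h6
      simp [Polynomial.natDegree_X_pow] at this
      omega
  -- the Dickson polynomial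
  refine ⟨Polynomial.dickson 1 1 d, ?_⟩
  have hφinj : Function.Injective φ := φ.toRingHom.injective
  apply hφinj
  rw [← TwistedCheb.aeval_X_ratfunc, ← Polynomial.aeval_algHom_apply, hφ, hf, hζ1, map_one, one_mul]
  rw [Polynomial.aeval_def, ← Polynomial.eval_map, Polynomial.map_dickson, map_one]
  rw [Polynomial.dickson_one_one_eval_add_inv _ _ hXi, inv_pow]
end

section
/- Let d ≥ 2 and let G be a closed fractal subgroup of Aut T_d. If H is a closed subgroup of G contained in the center Z(G), then the self-similar closure of H in G is also contained in Z(G). -/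
open scoped Pointwise

namespace TreeDyn

/-- **Central subgroups are self-similarity-closed in fractal groups.**
Let `d ≥ 2` and let `G` be a closed fractal subgroup of `Aut T_d`.  If `H` is a closed
subgroup of `G` contained in the center `Z(G)`, then the self-similar closure of `H` in
`G` is also contained in `Z(G)`. -/
theorem center_selfSimilarClosure (d : ℕ) (hd : 2 ≤ d)
    (G : Subgroup (AutT d)) (hGclosed : IsClosed (G : Set (AutT d)))
    (hGfractal : IsFractal d G)
    (H : Subgroup (AutT d)) (hHG : H ≤ G) (hHclosed : IsClosed (H : Set (AutT d)))
    (hHcentral : ∀ h ∈ H, ∀ g ∈ G, h * g = g * h) :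
    ∀ J : Subgroup (AutT d), IsSelfSimilarClosure d G H J →
      ∀ j ∈ J, ∀ g ∈ G, j * g = g * j := by
  -- T2 space instance
  have hT2 : T2Space (AutT d) := by
    have hinj : Function.Injective (fun g : AutT d => (g.toPerm : Vertex d → Vertex d)) := by
      intro a b hab
      apply Subtype.ext
      exact Equiv.coe_fn_injective hab
    exact Topology.IsEmbedding.t2Space ⟨⟨rfl⟩, hinj⟩
  set J' : Subgroup (AutT d) := G ⊓ Subgroup.centralizer (G : Set (AutT d)) with hJ'
  have hHJ' : H ≤ J' := by
    intro h hh
    exact ⟨hHG hh, Subgroup.mem_centralizer_iff.mpr fun g hg => (hHcentral h hh g hg).symm⟩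
  have hJ'G : J' ≤ G := inf_le_left
  have hJ'closed : IsClosed (J' : Set (AutT d)) := by
    have h2 : IsClosed (Subgroup.centralizer (G : Set (AutT d)) : Set (AutT d)) := by
      have : (Subgroup.centralizer (G : Set (AutT d)) : Set (AutT d))
          = ⋂ g ∈ (G : Set (AutT d)), {x : AutT d | g * x = x * g} := by
        ext x
        simp [Subgroup.mem_centralizer_iff, Set.mem_iInter]
      rw [this]
      exact isClosed_biInter fun g _ =>
        isClosed_eq (continuous_mul_left g) (continuous_mul_right g)
    exact hGclosed.inter h2
  have hJ'ss : IsSelfSimilar d J' := by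
    intro v x hx
    obtain ⟨⟨j, hjstab⟩, hjJ', rfl⟩ := hx
    have hjG : j ∈ G := (Subgroup.mem_subgroupOf.mp hjJ').1
    have hjcen : j ∈ Subgroup.centralizer (G : Set (AutT d)) :=
      (Subgroup.mem_subgroupOf.mp hjJ').2
    refine Subgroup.mem_inf.mpr ⟨?_, Subgroup.mem_centralizer_iff.mpr ?_⟩
    · -- section is in G since G is fractal
      rw [← hGfractal v]
      exact ⟨⟨j, hjstab⟩, Subgroup.mem_subgroupOf.mpr hjG, rfl⟩
    · intro g hg
      rw [← hGfractal v] at hg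
      obtain ⟨k, hkG, rfl⟩ := hg
      rw [← map_mul, ← map_mul]
      congr 1
      apply Subtype.ext
      show k.1 * j = j * k.1
      exact Subgroup.mem_centralizer_iff.mp hjcen k.1
        (Subgroup.mem_subgroupOf.mp hkG)
  intro J hJ j hj g hg
  have hle : J ≤ J' := hJ.2.2.2.2 J' hHJ' hJ'G hJ'closed hJ'ss
  exact (Subgroup.mem_centralizer_iff.mp (hle hj).2 g hg).symm

end TreeDyn
end

section
/- For every positive integer n, the Frattini subgroup of the dihedral group D_n of order 2n equals the cyclic subgroup generated by r^{rad(n)}, where r is the rotation of order n and rad(n) is the radical of n (the product of the distinct prime divisors of n, with rad(1) = 1); consequently, the index of the Frattini subgroup in D_n is 2·rad(n). -/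
/-- The radical of a positive integer `n`: the product of the distinct primes dividing `n`
(the empty product `1` when `n = 1`). -/
def radN (n : ℕ) : ℕ := n.primeFactors.prod id

namespace FratDih

open DihedralGroup Subgroup

lemma radN_dvd (n : ℕ) : radN n ∣ n := Nat.prod_primeFactors_dvd n

lemma prime_dvd_radN {n p : ℕ} (hp : p.Prime) (hpn : p ∣ n) (hn : n ≠ 0) : p ∣ radN n :=
  Finset.dvd_prod_of_mem id (Nat.mem_primeFactors.mpr ⟨hp, hpn, hn⟩)

lemma isCoatom_of_index_prime {G : Type*} [Group G] {H : Subgroup G} {p : ℕ} (hp : p.Prime)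
    (h : H.index = p) : IsCoatom H := by
  constructor
  · intro ht
    rw [ht, Subgroup.index_top] at h
    exact hp.one_lt.ne' h.symm
  · intro K hK
    have hle : H ≤ K := hK.le
    have hmul := Subgroup.relIndex_mul_index hle
    rw [h] at hmul
    rcases hp.eq_one_or_self_of_dvd K.index (dvd_of_mul_left_eq _ hmul) with h1 | h1
    · exact Subgroup.index_eq_one.mp h1
    · exfalso
      rw [h1] at hmul
      have h2 : H.relIndex K = 1 := mul_right_cancel₀ hp.pos.ne' (by rw [hmul, one_mul])
      exact hK.2 (Subgroup.relIndex_eq_one.mp h2)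

lemma r_inv {m : ℕ} (a : ZMod m) : (r a)⁻¹ = r (-a) := rfl

lemma r_pow {m : ℕ} (a : ZMod m) (k : ℕ) : (r a) ^ k = r ((k : ZMod m) * a) := by
  induction k with
  | zero => simp
  | succ k ih => rw [pow_succ, ih, r_mul_r]; congr 1; push_cast; ring

lemma r_zpow {m : ℕ} (a : ZMod m) (k : ℤ) : (r a) ^ k = r ((k : ZMod m) * a) := by
  induction k using Int.induction_on with
  | zero => simp
  | succ i ih => rw [zpow_add_one, ih, r_mul_r]; congr 1; push_cast; ring
  | pred i ih => rw [zpow_sub_one, ih, r_inv, r_mul_r]; congr 1; push_cast; ring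

lemma mem_zpowers_r_iff {m : ℕ} {a x : ZMod m} :
    r x ∈ zpowers (r a) ↔ ∃ k : ℤ, (k : ZMod m) * a = x := by
  rw [Subgroup.mem_zpowers_iff]
  constructor
  · rintro ⟨k, hk⟩
    rw [r_zpow] at hk
    exact ⟨k, by injection hk⟩
  · rintro ⟨k, hk⟩
    exact ⟨k, by rw [r_zpow, hk]⟩

lemma sr_not_mem_zpowers_r {m : ℕ} {a b : ZMod m} : sr b ∉ zpowers (r a) := by
  rw [Subgroup.mem_zpowers_iff]
  rintro ⟨k, hk⟩
  rw [r_zpow] at hk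
  exact absurd hk (by simp)

lemma sr_sq {m : ℕ} (c : ZMod m) : (sr c : DihedralGroup m) ^ (2 : ℕ) = 1 := by
  rw [pow_two, sr_mul_sr, sub_self, one_def]

lemma mem_zpowers_sr_r {m : ℕ} {c a : ZMod m} :
    r a ∈ zpowers (sr c) ↔ a = 0 := by
  rw [Subgroup.mem_zpowers_iff]
  constructor
  · rintro ⟨k, hk⟩
    rw [zpow_eq_zpow_emod' k (sr_sq c)] at hk
    rw [show ((2:ℕ):ℤ) = 2 from rfl] at hk
    rcases Int.emod_two_eq k with h | h <;> rw [h] at hk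
    · simp only [zpow_zero] at hk
      rw [one_def] at hk
      injection hk with h'
      exact h'.symm
    · simp only [zpow_one] at hk
      exact absurd hk (by simp)
  · rintro rfl
    exact ⟨0, by rw [zpow_zero, one_def]⟩

lemma mem_zpowers_sr_sr {m : ℕ} {c b : ZMod m} :
    sr b ∈ zpowers (sr c) ↔ b = c := by
  rw [Subgroup.mem_zpowers_iff]
  constructor
  · rintro ⟨k, hk⟩
    rw [zpow_eq_zpow_emod' k (sr_sq c)] at hk
    rw [show ((2:ℕ):ℤ) = 2 from rfl] at hk
    rcases Int.emod_two_eq k with h | h <;> rw [h] at hk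
    · simp only [zpow_zero] at hk
      rw [one_def] at hk
      exact absurd hk (by intro h; cases h)
    · simp only [zpow_one] at hk
      injection hk with h'
      exact h'.symm
  · rintro rfl
    exact ⟨1, by rw [zpow_one]⟩

/-- Reduction homomorphism `D_n → D_p` for `p ∣ n`. -/
def phi {n : ℕ} (p : ℕ) (h : p ∣ n) : DihedralGroup n →* DihedralGroup p where
  toFun := fun x => match x with
    | .r a => .r (ZMod.castHom h (ZMod p) a)
    | .sr a => .sr (ZMod.castHom h (ZMod p) a)
  map_one' := by
    rw [show (1 : DihedralGroup n) = .r 0 from rfl]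
    simp
  map_mul' := by
    rintro (a | a) (b | b) <;> simp [ZMod.cast_add h, ZMod.cast_sub h]

@[simp] lemma phi_r {n : ℕ} (p : ℕ) (h : p ∣ n) (a : ZMod n) :
    phi p h (r a) = r (ZMod.castHom h (ZMod p) a) := rfl

@[simp] lemma phi_sr {n : ℕ} (p : ℕ) (h : p ∣ n) (a : ZMod n) :
    phi p h (sr a) = sr (ZMod.castHom h (ZMod p) a) := rfl

lemma phi_surjective {n p : ℕ} [NeZero p] (h : p ∣ n) : Function.Surjective (phi p h) := by
  rintro (b | b)
  · exact ⟨.r ((b.val : ℕ) : ZMod n), by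
      simp [ZMod.castHom_apply, ZMod.cast_natCast h, ZMod.natCast_rightInverse b]⟩
  · exact ⟨.sr ((b.val : ℕ) : ZMod n), by
      simp [ZMod.castHom_apply, ZMod.cast_natCast h, ZMod.natCast_rightInverse b]⟩

end FratDih

namespace FratDih

open DihedralGroup Subgroup

variable {n : ℕ}

lemma index_zpowers_r_one (hn : 0 < n) : (zpowers (r (1 : ZMod n))).index = 2 := by
  haveI : NeZero n := ⟨hn.ne'⟩
  have hc := Subgroup.card_mul_index (zpowers (r (1 : ZMod n)))
  rw [Nat.card_zpowers, orderOf_r_one, DihedralGroup.nat_card] at hc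
  exact Nat.eq_of_mul_eq_mul_left hn (by rw [hc]; ring)

lemma index_Mp (p : ℕ) [NeZero p] (hdvd : p ∣ n) (c : ZMod p) :
    ((zpowers (sr c)).comap (phi p hdvd)).index = p := by
  rw [Subgroup.index_comap_of_surjective _ (phi_surjective hdvd)]
  have hc := Subgroup.card_mul_index (zpowers (sr c))
  rw [Nat.card_zpowers, orderOf_sr, DihedralGroup.nat_card] at hc
  exact Nat.eq_of_mul_eq_mul_left two_pos hc

lemma cast_eq_self (a : ZMod n) [NeZero n] : ((a.val : ℕ) : ZMod n) = a :=
  ZMod.natCast_rightInverse a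

lemma r_radN_mem_coatom (hn : 0 < n) {M : Subgroup (DihedralGroup n)} (hM : IsCoatom M) :
    r ((radN n : ℕ) : ZMod n) ∈ M := by
  haveI : NeZero n := ⟨hn.ne'⟩
  by_cases hr1 : r (1 : ZMod n) ∈ M
  · have := M.pow_mem hr1 (radN n)
    rwa [r_one_pow] at this
  · -- the additive subgroup of integers k with r k ∈ M
    set I : AddSubgroup ℤ :=
      { carrier := {k : ℤ | r ((k : ZMod n)) ∈ M}
        zero_mem' := by
          simp only [Set.mem_setOf_eq, Int.cast_zero, ← one_def]
          exact M.one_mem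
        add_mem' := by
          intro a b ha hb
          simp only [Set.mem_setOf_eq, Int.cast_add, ← r_mul_r]
          exact M.mul_mem ha hb
        neg_mem' := by
          intro a ha
          simp only [Set.mem_setOf_eq, Int.cast_neg, ← r_inv]
          exact M.inv_mem ha } with hIdef
    have hImem : ∀ k : ℤ, (r ((k : ZMod n)) ∈ M) ↔ k ∈ I := fun k => Iff.rfl
    obtain ⟨d0, hd0⟩ := Int.subgroup_cyclic I
    have hdvd_mem : ∀ k : ℤ, k ∈ I ↔ d0 ∣ k := by
      intro k
      rw [hd0, AddSubgroup.mem_closure_singleton]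
      constructor
      · rintro ⟨m, hm⟩; exact ⟨m, by rw [← hm, zsmul_eq_mul]; push_cast; ring⟩
      · rintro ⟨m, hm⟩; exact ⟨m, by rw [hm, zsmul_eq_mul]; push_cast; ring⟩
    have hnI : (n : ℤ) ∈ I := by
      rw [← hImem]
      simp only [Int.cast_natCast, ZMod.natCast_self, ← one_def]
      exact M.one_mem
    have hd0n : d0 ∣ (n : ℤ) := (hdvd_mem _).mp hnI
    have h1I : (1 : ℤ) ∉ I := by
      intro h
      rw [← hImem] at h
      simp only [Int.cast_one] at h
      exact hr1 h
    have hd0ne1 : ¬ d0 ∣ 1 := fun h => h1I ((hdvd_mem 1).mpr h)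
    set d : ℕ := d0.natAbs with hddef
    have hdn : d ∣ n := by
      have := Int.natAbs_dvd_natAbs.mpr hd0n
      simpa using this
    have hd1 : d ≠ 1 := by
      intro h
      apply hd0ne1
      rw [← Int.natAbs_dvd_natAbs]
      simp [← hddef, h]
    set p : ℕ := d.minFac with hpdef
    have hp : p.Prime := Nat.minFac_prime hd1
    have hpd : p ∣ d := Nat.minFac_dvd d
    have hpn : p ∣ n := hpd.trans hdn
    haveI : NeZero p := ⟨hp.pos.ne'⟩
    -- p divides every element of I
    have hpI : ∀ k : ℕ, ((k : ℤ) ∈ I) → p ∣ k := by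
      intro k hk
      have hdk : d ∣ k := by
        have := Int.natAbs_dvd_natAbs.mpr ((hdvd_mem _).mp hk)
        simpa using this
      exact hpd.trans hdk
    -- M contains a reflection
    obtain ⟨c, hc⟩ : ∃ c, sr c ∈ M := by
      by_contra hcon
      push_neg at hcon
      have hMR : M ≤ zpowers (r (1 : ZMod n)) := by
        intro x hx
        cases x with
        | r a =>
          rw [mem_zpowers_r_iff]
          exact ⟨(a.val : ℤ), by push_cast [cast_eq_self]; ring⟩
        | sr a => exact absurd hx (hcon a)
      rcases eq_or_lt_of_le hMR with h | h
      · exact hr1 (h ▸ mem_zpowers _)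
      · have := hM.2 _ h
        exact sr_not_mem_zpowers_r (a := (1 : ZMod n)) (b := 0) (this ▸ Subgroup.mem_top _)
    set c' : ZMod p := ZMod.castHom hpn (ZMod p) c with hc'def
    set M' : Subgroup (DihedralGroup n) := (zpowers (sr c')).comap (phi p hpn) with hM'def
    have hMM' : M ≤ M' := by
      intro x hx
      cases x with
      | r a =>
        have haI : ((a.val : ℕ) : ℤ) ∈ I := by
          rw [← hImem]
          push_cast [cast_eq_self]
          exact hx
        have hpa : p ∣ a.val := hpI _ haI
        simp only [hM'def, Subgroup.mem_comap, phi_r]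
        have hz : ZMod.castHom hpn (ZMod p) a = 0 := by
          rw [← cast_eq_self a, map_natCast]
          exact (ZMod.natCast_eq_zero_iff _ _).mpr hpa
        rw [hz]
        rw [show (r (0 : ZMod p) : DihedralGroup p) = 1 from rfl]
        exact Subgroup.one_mem _
      | sr b =>
        have hbc : r (b - c) ∈ M := by
          have := M.mul_mem hc hx
          rwa [sr_mul_sr] at this
        have hI2 : (((b - c).val : ℕ) : ℤ) ∈ I := by
          rw [← hImem]
          push_cast [cast_eq_self]
          exact hbc
        have hpbc : p ∣ (b - c).val := hpI _ hI2
        have hz : ZMod.castHom hpn (ZMod p) (b - c) = 0 := by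
          rw [← cast_eq_self (b - c), map_natCast]
          exact (ZMod.natCast_eq_zero_iff _ _).mpr hpbc
        rw [map_sub, sub_eq_zero] at hz
        simp only [hM'def, Subgroup.mem_comap, phi_sr]
        rw [hz]
        exact mem_zpowers _
    have hM'ne : M' ≠ ⊤ := by
      intro htop
      have h1 : r (1 : ZMod n) ∈ M' := htop ▸ Subgroup.mem_top _
      simp only [hM'def, Subgroup.mem_comap, phi_r, map_one] at h1
      rw [mem_zpowers_sr_r] at h1
      haveI := Fact.mk hp.one_lt
      exact one_ne_zero h1
    have hMeq : M = M' := by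
      rcases eq_or_lt_of_le hMM' with h | h
      · exact h
      · exact absurd (hM.2 _ h) hM'ne
    rw [hMeq, hM'def, Subgroup.mem_comap, phi_r]
    have hz : ZMod.castHom hpn (ZMod p) ((radN n : ℕ) : ZMod n) = 0 := by
      rw [map_natCast]
      exact (ZMod.natCast_eq_zero_iff _ _).mpr (prime_dvd_radN hp hpn hn.ne')
    rw [hz]
    rw [show (r (0 : ZMod p) : DihedralGroup p) = 1 from rfl]
    exact Subgroup.one_mem _

lemma K_le_frattini (hn : 0 < n) :
    zpowers (r ((radN n : ℕ) : ZMod n)) ≤ frattini (DihedralGroup n) := by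
  rw [Subgroup.zpowers_le, frattini, Order.radical]
  simp only [Subgroup.mem_iInf, Set.mem_setOf_eq]
  exact fun M hM => r_radN_mem_coatom hn hM

lemma frattini_le_K (hn : 0 < n) :
    frattini (DihedralGroup n) ≤ zpowers (r ((radN n : ℕ) : ZMod n)) := by
  haveI : NeZero n := ⟨hn.ne'⟩
  intro x hx
  have hxR : x ∈ zpowers (r (1 : ZMod n)) :=
    frattini_le_coatom (isCoatom_of_index_prime Nat.prime_two (index_zpowers_r_one hn)) hx
  cases x with
  | sr b => exact absurd hxR sr_not_mem_zpowers_r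
  | r a =>
    have hdvd : ∀ p ∈ n.primeFactors, p ∣ a.val := by
      intro p hpmem
      obtain ⟨hp, hpn, -⟩ := Nat.mem_primeFactors.mp hpmem
      haveI : NeZero p := ⟨hp.pos.ne'⟩
      have hcoat : IsCoatom ((zpowers (sr (0 : ZMod p))).comap (phi p hpn)) :=
        isCoatom_of_index_prime hp (index_Mp p hpn 0)
      have hxM := frattini_le_coatom hcoat hx
      rw [Subgroup.mem_comap, phi_r, mem_zpowers_sr_r] at hxM
      rw [← cast_eq_self a, map_natCast] at hxM
      exact (ZMod.natCast_eq_zero_iff _ _).mp hxM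
    have hrad : radN n ∣ a.val :=
      Finset.prod_primes_dvd _ (fun p hp => (Nat.mem_primeFactors.mp hp).1.prime) hdvd
    obtain ⟨q, hq⟩ := hrad
    rw [Subgroup.mem_zpowers_iff]
    refine ⟨(q : ℤ), ?_⟩
    rw [zpow_natCast, r_pow]
    congr 1
    rw [← cast_eq_self a, hq]
    push_cast
    ring

lemma index_K (hn : 0 < n) :
    (zpowers (r ((radN n : ℕ) : ZMod n))).index = 2 * radN n := by
  haveI : NeZero n := ⟨hn.ne'⟩
  set R := radN n with hR
  obtain ⟨m, hm⟩ : R ∣ n := radN_dvd n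
  have hrpos : 0 < R := by
    rcases Nat.eq_zero_or_pos R with h | h
    · rw [h, zero_mul] at hm; omega
    · exact h
  have hmpos : 0 < m := by
    rcases Nat.eq_zero_or_pos m with h | h
    · rw [h, mul_zero] at hm; omega
    · exact h
  have hgcd : n.gcd (((R : ℕ) : ZMod n)).val = R := by
    rw [ZMod.val_natCast]
    calc n.gcd (R % n) = (R % n).gcd n := Nat.gcd_comm _ _
      _ = n.gcd R := (Nat.gcd_rec n R).symm
      _ = R.gcd n := Nat.gcd_comm _ _
      _ = R := Nat.gcd_eq_left (hR ▸ radN_dvd n)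
  have hcard : Nat.card (zpowers (r ((R : ℕ) : ZMod n))) = m := by
    rw [Nat.card_zpowers, orderOf_r, hgcd, hm, Nat.mul_div_cancel_left _ hrpos]
  have hc := Subgroup.card_mul_index (zpowers (r ((R : ℕ) : ZMod n)))
  rw [hcard, DihedralGroup.nat_card] at hc
  have h2 : m * (zpowers (r ((R : ℕ) : ZMod n))).index = m * (2 * R) := by
    rw [hc, hm]; ring
  exact Nat.eq_of_mul_eq_mul_left hmpos h2

end FratDih

/-- **The Frattini subgroup of the dihedral group.**
For every positive integer `n`, the Frattini subgroup of the dihedral group `D_n` of order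
`2n` equals the cyclic subgroup generated by `r^(rad n)`, where `r` is the rotation of order
`n`; consequently its index in `D_n` is `2·rad(n)`. -/
theorem frattini_dihedralGroup (n : ℕ) (hn : 0 < n) :
    frattini (DihedralGroup n) = Subgroup.zpowers (DihedralGroup.r (radN n : ZMod n)) ∧
      (frattini (DihedralGroup n)).index = 2 * radN n := by
  have heq : frattini (DihedralGroup n)
      = Subgroup.zpowers (DihedralGroup.r (radN n : ZMod n)) :=
    le_antisymm (FratDih.frattini_le_K hn) (FratDih.K_le_frattini hn)
  exact ⟨heq, by rw [heq]; exact FratDih.index_K hn⟩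
end
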